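/- Assume 2αJΦ′(0) < 1, and let (p_n, d_n)_{n≥0} be any orbit of the dynamical system generated by Ψ with d₀ ∈ [−1,1]. Then either (p_n, d_n) → (0,0) as n → ∞, or there exists a finite r ≥ 0 such that either 0 ≤ p_{r+1} ≤ λ d_r or λ d_r ≤ p_{r+1} ≤ 0. -/

import Mathlib

open Filter Topology Set

lemma aux_deriv_nonneg (Φ Φ' : ℝ → ℝ) (hmono : Monotone Φ)
    (hderiv : ∀ x, HasDerivAt Φ (Φ' x) x) (x : ℝ) : 0 ≤ Φ' x := by
  have h := (hderiv x).hasDerivWithinAt (s := Set.Ioi x)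
  rw [hasDerivWithinAt_iff_tendsto_slope] at h
  have hs : Set.Ioi x \ {x} = Set.Ioi x := by
    apply Set.diff_singleton_eq_self; simp
  rw [hs] at h
  refine ge_of_tendsto h ?_
  filter_upwards [self_mem_nhdsWithin] with y hy
  have hxy : x < y := hy
  rw [slope_def_field]
  have := hmono hxy.le
  have h2 : (0:ℝ) < y - x := by linarith
  have h3 : 0 ≤ Φ y - Φ x := by linarith
  positivity

lemma aux_pos (α J lam : ℝ) (Φ Φ' : ℝ → ℝ)
    (hα : 0 < α) (hα1 : α < 1) (hJ : 0 < J) (hlam : 0 < lam)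
    (hmono : Monotone Φ)
    (hbot : Filter.Tendsto Φ Filter.atBot (nhds 0))
    (htop : Filter.Tendsto Φ Filter.atTop (nhds 1))
    (hderiv : ∀ x, HasDerivAt Φ (Φ' x) x)
    (hmax : ∀ x, Φ' x ≤ Φ' 0)
    (hincr : StrictMonoOn Φ' (Set.Iio (0 : ℝ)))
    (hdecr : StrictAntiOn Φ' (Set.Ioi (0 : ℝ)))
    (hΦ0 : Φ 0 = 1 / 2)
    (hb : 2 * α * J * Φ' 0 < 1)
    (p d : ℕ → ℝ)
    (hp : ∀ n, p (n + 1) = p n + lam * d n)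
    (hd : ∀ n, d (n + 1) =
      α * (1 - 2 * Φ (p n + (lam - J) * d n)) + (1 - α) * (1 - 2 * Φ (p n + lam * d n)))
    (hd0 : |d 0| ≤ 1)
    (hpos : ∀ n, 0 < p n) :
    Tendsto p atTop (nhds 0) ∧ Tendsto d atTop (nhds 0) := by
  -- basic facts about Φ'
  have hnn : ∀ x, 0 ≤ Φ' x := aux_deriv_nonneg Φ Φ' hmono hderiv
  have hΦ'pos : ∀ x, 0 < Φ' x := by
    intro x
    rcases lt_trichotomy x 0 with hx | hx | hx
    · have h1 : Φ' (x - 1) < Φ' x := hincr (by simp; linarith) (by simpa) (by linarith)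
      have := hnn (x - 1); linarith
    · subst hx
      have h1 : Φ' (-2 : ℝ) < Φ' (-1 : ℝ) := hincr (by norm_num) (by norm_num) (by norm_num)
      have h2 := hmax (-1 : ℝ)
      have := hnn (-2 : ℝ); linarith
    · have h1 : Φ' (x + 1) < Φ' x := hdecr (by simpa) (by simp; linarith) (by linarith)
      have := hnn (x + 1); linarith
  have hΦ'0 : 0 < Φ' 0 := hΦ'pos 0
  have hSM : StrictMono Φ := by
    apply strictMono_of_deriv_pos
    intro x; rw [(hderiv x).deriv]; exact hΦ'pos x
  have hcont : Continuous Φ := by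
    rw [continuous_iff_continuousAt]; exact fun x => (hderiv x).continuousAt
  -- bounds on Φ
  have hΦle1 : ∀ x, Φ x ≤ 1 := by
    intro x
    refine ge_of_tendsto htop ?_
    filter_upwards [eventually_ge_atTop x] with y hy using hmono hy
  have hΦge0 : ∀ x, 0 ≤ Φ x := by
    intro x
    refine le_of_tendsto hbot ?_
    filter_upwards [eventually_le_atBot x] with y hy using hmono hy
  have hΦhalf : ∀ x, 0 < x → 1 / 2 < Φ x := by
    intro x hx; rw [← hΦ0]; exact hSM hx
  -- Lipschitz bound
  have hlip : ∀ x y : ℝ, x ≤ y → Φ y - Φ x ≤ Φ' 0 * (y - x) := by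
    intro x y hxy
    rcases eq_or_lt_of_le hxy with rfl | hxy
    · simp
    · obtain ⟨c, _, hc⟩ := exists_hasDerivAt_eq_slope Φ Φ' hxy
        (hcont.continuousOn) (fun z _ => hderiv z)
      have h1 : Φ' c ≤ Φ' 0 := hmax c
      have h2 : (0:ℝ) < y - x := by linarith
      have : (Φ y - Φ x) / (y - x) ≤ Φ' 0 := hc ▸ h1
      calc Φ y - Φ x = (Φ y - Φ x) / (y - x) * (y - x) := by field_simp
        _ ≤ Φ' 0 * (y - x) := by nlinarith
  set k := 2 * α * J * Φ' 0 with hkdef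
  have hk0 : 0 < k := by positivity
  -- rewritten recurrence
  have hd' : ∀ n, d (n + 1) =
      2 * α * (Φ (p (n + 1)) - Φ (p (n + 1) - J * d n)) + (1 - 2 * Φ (p (n + 1))) := by
    intro n
    have e1 : p n + (lam - J) * d n = (p n + lam * d n) - J * d n := by ring
    rw [hd n, hp n, e1]; ring
  -- |d n| ≤ 1
  have hdle : ∀ n, |d n| ≤ 1 := by
    intro n
    cases n with
    | zero => exact hd0
    | succ m =>
      rw [hd m, abs_le]
      constructor
      · nlinarith [hΦle1 (p m + (lam - J) * d m), hΦle1 (p m + lam * d m),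
          hΦge0 (p m + (lam - J) * d m), hΦge0 (p m + lam * d m)]
      · nlinarith [hΦle1 (p m + (lam - J) * d m), hΦle1 (p m + lam * d m),
          hΦge0 (p m + (lam - J) * d m), hΦge0 (p m + lam * d m)]
  -- if d n ≤ 0 then d (n+1) ≤ 1 - 2 Φ (p (n+1)) < 0
  have step_neg : ∀ n, d n ≤ 0 → d (n + 1) ≤ 1 - 2 * Φ (p (n + 1)) := by
    intro n hn
    rw [hd' n]
    have : Φ (p (n + 1)) ≤ Φ (p (n + 1) - J * d n) := hmono (by nlinarith)
    nlinarith
  have step_pos : ∀ n, 0 < d n → d (n + 1) ≤ k * d n - (2 * Φ (p (n + 1)) - 1) := by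
    intro n hn
    rw [hd' n]
    have h1 : Φ (p (n + 1)) - Φ (p (n + 1) - J * d n) ≤ Φ' 0 * (J * d n) := by
      have := hlip (p (n + 1) - J * d n) (p (n + 1)) (by nlinarith)
      calc Φ (p (n + 1)) - Φ (p (n + 1) - J * d n)
          ≤ Φ' 0 * (p (n + 1) - (p (n + 1) - J * d n)) := this
        _ = Φ' 0 * (J * d n) := by ring
    nlinarith
  -- there exists N with d N ≤ 0
  have exN : ∃ N, d N ≤ 0 := by
    by_contra hall
    push_neg at hall
    have hmonop : ∀ n, p n ≤ p (n + 1) := by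
      intro n; rw [hp n]; nlinarith [hall n]
    have hge : ∀ n, p 1 ≤ p (n + 1) := by
      intro n
      induction n with
      | zero => exact le_refl _
      | succ m ih => exact le_trans ih (hmonop (m + 1))
    set c := 2 * Φ (p 1) - 1 with hc
    have hcpos : 0 < c := by
      have := hΦhalf (p 1) (hpos 1); rw [hc]; linarith
    have hdec : ∀ n, d (n + 1) ≤ d n - c := by
      intro n
      have h1 := step_pos n (hall n)
      have h2 : Φ (p 1) ≤ Φ (p (n + 1)) := hmono (hge n)
      have h3 : k * d n ≤ d n := by nlinarith [hall n]
      rw [hc]; linarith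
    have key : ∀ m, d (m + 1) ≤ d 1 - m * c := by
      intro m
      induction m with
      | zero => simp
      | succ i ih =>
        have := hdec (i + 1)
        push_cast
        push_cast at ih
        linarith
    obtain ⟨m, hm⟩ := exists_nat_gt (2 / c)
    have h1 := key m
    have h2 := (abs_le.mp (hdle 1)).2
    have h3 : 2 < m * c := by
      rw [div_lt_iff₀ hcpos] at hm; linarith
    have := hall (m + 1)
    linarith
  obtain ⟨N, hN⟩ := exN
  -- d stays nonpositive from N on
  have hdneg : ∀ m, d (N + m) ≤ 0 := by
    intro m
    induction m with
    | zero => simpa using hN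
    | succ i ih =>
      have h1 := step_neg (N + i) ih
      have h2 := hΦhalf (p (N + i + 1)) (hpos (N + i + 1))
      have h3 : d (N + i + 1) ≤ 0 := by linarith
      exact h3
  -- p is antitone from N on
  set t : ℕ → ℝ := fun m => p (N + m) with ht
  have hanti : Antitone t := by
    apply antitone_nat_of_succ_le
    intro m
    have h3 : p (N + m + 1) ≤ p (N + m) := by
      rw [hp (N + m)]; nlinarith [hdneg m]
    exact h3
  have hbdd : BddBelow (Set.range t) := by
    refine ⟨0, ?_⟩
    rintro x ⟨m, rfl⟩
    exact (hpos (N + m)).le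
  set L := ⨅ m, t m with hL
  have htL : Tendsto t atTop (nhds L) := tendsto_atTop_ciInf hanti hbdd
  have htL' : Tendsto (fun m => t (m + 1)) atTop (nhds L) :=
    htL.comp (tendsto_add_atTop_nat 1)
  -- d (N + m) → 0
  have hdlim : Tendsto (fun m => d (N + m)) atTop (nhds 0) := by
    have heq : ∀ m, d (N + m) = (t (m + 1) - t m) / lam := by
      intro m
      have : t (m + 1) = t m + lam * d (N + m) := by
        simp only [ht, Nat.add_succ]
        exact hp (N + m)
      rw [this]; field_simp; ring
    have h1 : Tendsto (fun m => (t (m + 1) - t m) / lam) atTop (nhds ((L - L) / lam)) :=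
      (htL'.sub htL).div_const lam
    simp only [sub_self, zero_div] at h1
    exact h1.congr (fun m => (heq m).symm)
  have hdlim' : Tendsto (fun m => d (N + m + 1)) atTop (nhds 0) := by
    exact hdlim.comp (tendsto_add_atTop_nat 1)
  -- identify L = 0
  have hΦL : Φ L = 1 / 2 := by
    have h1 : Tendsto (fun m => Φ (t (m + 1))) atTop (nhds (Φ L)) :=
      (hcont.tendsto L).comp htL'
    have h2 : Tendsto (fun m => t (m + 1) - J * d (N + m)) atTop (nhds L) := by
      have := htL'.sub ((hdlim.const_mul J))
      simpa using this
    have h3 : Tendsto (fun m => Φ (t (m + 1) - J * d (N + m))) atTop (nhds (Φ L)) :=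
      (hcont.tendsto L).comp h2
    have h4 : Tendsto (fun m => d (N + m + 1)) atTop
        (nhds (2 * α * (Φ L - Φ L) + (1 - 2 * Φ L))) := by
      have : ∀ m, d (N + m + 1) =
          2 * α * (Φ (t (m + 1)) - Φ (t (m + 1) - J * d (N + m))) + (1 - 2 * Φ (t (m + 1))) := by
        intro m
        exact hd' (N + m)
      refine Tendsto.congr (fun m => (this m).symm) ?_
      have := ((h1.sub h3).const_mul (2 * α)).add
        ((tendsto_const_nhds (x := (1:ℝ))).sub (h1.const_mul 2))
      exact this
    have h5 : 2 * α * (Φ L - Φ L) + (1 - 2 * Φ L) = 0 :=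
      tendsto_nhds_unique h4 hdlim'
    linarith [h5]
  have hL0 : L = 0 := by
    apply hSM.injective
    rw [hΦL, hΦ0]
  -- conclude
  rw [hL0] at htL
  constructor
  · rw [← tendsto_add_atTop_iff_nat N]
    exact htL.congr (fun m => congrArg p (Nat.add_comm N m))
  · rw [← tendsto_add_atTop_iff_nat N]
    exact hdlim.congr (fun m => congrArg d (Nat.add_comm N m))


/-- Lemma sitin: assuming 2αJΦ′(0) < 1, every orbit of the dynamical system
generated by Ψ with d₀ ∈ [−1,1] either converges to (0,0) or reaches a time r
with 0 ≤ p_{r+1} ≤ λd_r or λd_r ≤ p_{r+1} ≤ 0. -/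
theorem orbit_dichotomy
    (α J lam : ℝ) (Φ Φ' : ℝ → ℝ)
    (hα : 0 < α) (hα1 : α < 1) (hJ : 0 < J) (hlam : 0 < lam)
    (hmono : Monotone Φ)
    (hbot : Filter.Tendsto Φ Filter.atBot (nhds 0))
    (htop : Filter.Tendsto Φ Filter.atTop (nhds 1))
    (hderiv : ∀ x, HasDerivAt Φ (Φ' x) x)
    (hmax : ∀ x, Φ' x ≤ Φ' 0)
    (hincr : StrictMonoOn Φ' (Set.Iio (0 : ℝ)))
    (hdecr : StrictAntiOn Φ' (Set.Ioi (0 : ℝ)))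
    (hΦ0 : Φ 0 = 1 / 2)
    (hb : 2 * α * J * Φ' 0 < 1)
    (Ψ : ℝ × ℝ → ℝ × ℝ)
    (hΨ : ∀ x : ℝ × ℝ, Ψ x =
      (x.1 + lam * x.2,
       α * (1 - 2 * Φ (x.1 + (lam - J) * x.2))
         + (1 - α) * (1 - 2 * Φ (x.1 + lam * x.2))))
    (s : ℕ → ℝ × ℝ)
    (horb : ∀ n : ℕ, s (n + 1) = Ψ (s n))
    (hd0 : (s 0).2 ∈ Set.Icc (-1 : ℝ) 1) :
    Filter.Tendsto s Filter.atTop (nhds ((0 : ℝ), (0 : ℝ))) ∨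
    ∃ r : ℕ,
      (0 ≤ (s (r + 1)).1 ∧ (s (r + 1)).1 ≤ lam * (s r).2) ∨
      (lam * (s r).2 ≤ (s (r + 1)).1 ∧ (s (r + 1)).1 ≤ 0) := by
  have hrec1 : ∀ n, (s (n + 1)).1 = (s n).1 + lam * (s n).2 := by
    intro n; rw [horb n, hΨ]
  have hrec2 : ∀ n, (s (n + 1)).2 =
      α * (1 - 2 * Φ ((s n).1 + (lam - J) * (s n).2))
        + (1 - α) * (1 - 2 * Φ ((s n).1 + lam * (s n).2)) := by
    intro n; rw [horb n, hΨ]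
  by_cases hex : ∃ r : ℕ,
      (0 ≤ (s (r + 1)).1 ∧ (s (r + 1)).1 ≤ lam * (s r).2) ∨
      (lam * (s r).2 ≤ (s (r + 1)).1 ∧ (s (r + 1)).1 ≤ 0)
  · exact Or.inr hex
  left
  push_neg at hex
  have hd0' : |(s 0).2| ≤ 1 := abs_le.2 ⟨hd0.1, hd0.2⟩
  rcases lt_trichotomy ((s 0).1) 0 with h0 | h0 | h0
  · -- all p n < 0 case
    have hneg : ∀ n, (s n).1 < 0 := by
      intro n
      induction n with
      | zero => exact h0
      | succ m ih =>
        by_contra hcon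
        push_neg at hcon
        have h1 := (hex m).1 hcon
        have h2 : (s (m + 1)).1 ≤ lam * (s m).2 := by
          rw [hrec1 m]; linarith
        linarith
    have key := aux_pos α J lam (fun x => 1 - Φ (-x)) (fun x => Φ' (-x))
      hα hα1 hJ hlam
      (by intro a b hab; simp only []
          have := hmono (neg_le_neg hab); linarith)
      (by have h1 : Filter.Tendsto (fun x : ℝ => Φ (-x)) Filter.atBot (nhds 1) :=
            htop.comp tendsto_neg_atBot_atTop
          have := (tendsto_const_nhds (x := (1:ℝ)) (f := Filter.atBot)).sub h1
          simpa using this)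
      (by have h1 : Filter.Tendsto (fun x : ℝ => Φ (-x)) Filter.atTop (nhds 0) :=
            hbot.comp tendsto_neg_atTop_atBot
          have := (tendsto_const_nhds (x := (1:ℝ)) (f := Filter.atTop)).sub h1
          simpa using this)
      (by intro x
          have h1 : HasDerivAt (fun y : ℝ => Φ (-y)) (Φ' (-x) * (-1)) x :=
            (hderiv (-x)).comp x (hasDerivAt_neg x)
          have h2 := h1.const_sub 1
          simpa using h2)
      (by intro x; simpa using hmax (-x))
      (by intro a ha b hb hab
          exact hdecr (Set.mem_Ioi.2 (by simp at hb ⊢; linarith))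
            (Set.mem_Ioi.2 (by simp at ha ⊢; linarith)) (neg_lt_neg hab))
      (by intro a ha b hb hab
          exact hincr (Set.mem_Iio.2 (by simp at hb ⊢; linarith))
            (Set.mem_Iio.2 (by simp at ha ⊢; linarith)) (neg_lt_neg hab))
      (by norm_num [hΦ0])
      (by simpa using hb)
      (fun n => -(s n).1) (fun n => -(s n).2)
      (by intro n
          show -(s (n + 1)).1 = -(s n).1 + lam * -(s n).2
          rw [hrec1 n]; ring)
      (by intro n
          have e1 : -(-(s n).1 + (lam - J) * -(s n).2) = (s n).1 + (lam - J) * (s n).2 := by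
            ring
          have e2 : -(-(s n).1 + lam * -(s n).2) = (s n).1 + lam * (s n).2 := by ring
          show -(s (n + 1)).2 =
            α * (1 - 2 * (1 - Φ (-(-(s n).1 + (lam - J) * -(s n).2))))
              + (1 - α) * (1 - 2 * (1 - Φ (-(-(s n).1 + lam * -(s n).2))))
          rw [e1, e2, hrec2 n]; ring)
      (by rw [abs_neg]; exact hd0')
      (fun n => by simpa using hneg n)
    obtain ⟨hP, hD⟩ := key
    have hP' : Filter.Tendsto (fun n => (s n).1) Filter.atTop (nhds 0) := by
      have := hP.neg; simpa using this
    have hD' : Filter.Tendsto (fun n => (s n).2) Filter.atTop (nhds 0) := by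
      have := hD.neg; simpa using this
    have := hP'.prodMk_nhds hD'
    simpa using this
  · -- p 0 = 0 : contradiction with hex 0
    exfalso
    have e0 : lam * (s 0).2 = (s 0).1 + lam * (s 0).2 := by rw [h0]; ring
    have h1 := (hex 0).1
    have h2 := (hex 0).2
    rw [hrec1 0] at h1 h2
    have h3 := h2 (le_of_eq e0)
    have h4 := h1 h3.le
    linarith
  · -- all p n > 0 case
    have hposal : ∀ n, 0 < (s n).1 := by
      intro n
      induction n with
      | zero => exact h0
      | succ m ih =>
        by_contra hcon
        push_neg at hcon
        have h2 : lam * (s m).2 ≤ (s (m + 1)).1 := by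
          rw [hrec1 m]; linarith
        have h1 := (hex m).2 h2
        linarith
    have key := aux_pos α J lam Φ Φ' hα hα1 hJ hlam hmono hbot htop hderiv hmax hincr hdecr
      hΦ0 hb (fun n => (s n).1) (fun n => (s n).2) hrec1 hrec2 hd0' hposal
    obtain ⟨hP, hD⟩ := key
    have := hP.prodMk_nhds hD
    simpa using this
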